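/- Let a and b be nonzero integers. Then the set {a, b, ab, ab²} contains a cube in ℚ_p for all but finitely many primes p. -/

import Mathlib

lemma cyclic_cube {G : Type*} [CommGroup G] [IsCyclic G] (x y : G) :
    ∃ z : G, z ^ 3 = x ∨ z ^ 3 = y ∨ z ^ 3 = x * y ∨ z ^ 3 = x * y ^ 2 := by
  obtain ⟨g, hg⟩ := IsCyclic.exists_generator (α := G)
  obtain ⟨m, rfl⟩ := hg x
  obtain ⟨n, rfl⟩ := hg y
  have hm : m % 3 = 0 ∨ m % 3 = 1 ∨ m % 3 = 2 := by omega
  have hn : n % 3 = 0 ∨ n % 3 = 1 ∨ n % 3 = 2 := by omega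
  have pow3 : ∀ t : ℤ, (g ^ t) ^ (3:ℕ) = g ^ (3 * t) := by
    intro t
    rw [← zpow_natCast (g ^ t) 3, ← zpow_mul, mul_comm]
    norm_num
  have key : (3:ℤ) ∣ m ∨ (3:ℤ) ∣ n ∨ (3:ℤ) ∣ (m + n) ∨ (3:ℤ) ∣ (m + 2*n) := by
    rcases hm with h1 | h1 | h1 <;> rcases hn with h2 | h2 | h2 <;> omega
  rcases key with ⟨t, ht⟩ | ⟨t, ht⟩ | ⟨t, ht⟩ | ⟨t, ht⟩
  · exact ⟨g ^ t, Or.inl (by rw [pow3, ← ht])⟩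
  · exact ⟨g ^ t, Or.inr (Or.inl (by rw [pow3, ← ht]))⟩
  · refine ⟨g ^ t, Or.inr (Or.inr (Or.inl ?_))⟩
    rw [pow3, ← ht, zpow_add]
  · refine ⟨g ^ t, Or.inr (Or.inr (Or.inr ?_))⟩
    rw [pow3, ← ht, show m + 2*n = m + n*2 by ring, zpow_add,
      ← zpow_natCast (g ^ n) 2, ← zpow_mul]
    norm_num

lemma hensel_cube {p : ℕ} [Fact p.Prime] (c : ℤ) (hp3 : ¬ (p:ℤ) ∣ 3) (hc : ¬ (p:ℤ) ∣ c)
    (z : ZMod p) (hz : z ^ 3 = (c : ZMod p)) : ∃ y : ℚ_[p], y ^ 3 = (c : ℚ_[p]) := by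
  set a : ℤ_[p] := ((z.val : ℤ) : ℤ_[p]) with ha
  have hdvd : (p:ℤ) ∣ ((z.val : ℤ)^3 - c) := by
    rw [← ZMod.intCast_zmod_eq_zero_iff_dvd]
    push_cast
    rw [ZMod.natCast_val, ZMod.cast_id, hz, sub_self]
  have hz0 : ¬ (p:ℤ) ∣ (z.val : ℤ) := by
    intro h
    apply hc
    have h3 : (p:ℤ) ∣ (z.val:ℤ)^3 := dvd_pow h three_ne_zero
    have := dvd_sub h3 hdvd
    simpa using this
  set F : Polynomial ℤ_[p] := Polynomial.X ^ 3 - Polynomial.C ((c:ℤ) : ℤ_[p]) with hF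
  have hevala : F.eval a = ((( (z.val:ℤ)^3 - c : ℤ)) : ℤ_[p]) := by
    simp [hF, ha]
  have hderiv : F.derivative.eval a = 3 * a ^ 2 := by
    simp [hF]; norm_num
  have hna : ‖a‖ = 1 := by
    rw [ha]
    refine le_antisymm (PadicInt.norm_le_one _) ?_
    by_contra h
    exact hz0 ((PadicInt.norm_int_lt_one_iff_dvd _).1 (lt_of_not_ge h))
  have hn3 : ‖(3 : ℤ_[p])‖ = 1 := by
    refine le_antisymm (PadicInt.norm_le_one _) ?_
    by_contra h
    have : ‖((3:ℤ) : ℤ_[p])‖ < 1 := by push_cast; exact lt_of_not_ge h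
    exact hp3 ((PadicInt.norm_int_lt_one_iff_dvd _).1 this)
  have hnorm : ‖F.eval a‖ < ‖F.derivative.eval a‖ ^ 2 := by
    have h1 := (PadicInt.norm_int_lt_one_iff_dvd ((z.val:ℤ)^3 - c)).2 hdvd
    rw [hevala, hderiv, norm_mul, norm_pow, hn3, hna]
    simpa using h1
  obtain ⟨r, hr, -⟩ := hensels_lemma hnorm
  refine ⟨(r : ℚ_[p]), ?_⟩
  have hr3 : r ^ 3 = (((c:ℤ)) : ℤ_[p]) := by
    have : F.eval r = r ^ 3 - ((c:ℤ) : ℤ_[p]) := by simp [hF]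
    rw [Polynomial.coe_aeval_eq_eval, this] at hr
    exact sub_eq_zero.1 hr
  calc (r : ℚ_[p]) ^ 3 = ((r ^ 3 : ℤ_[p]) : ℚ_[p]) := by push_cast; ring
    _ = (c : ℚ_[p]) := by rw [hr3]; push_cast; ring

/-- For nonzero integers `a, b`, the set `{a, b, ab, ab²}` contains a cube in `ℚ_p`
for all but finitely many primes `p`. -/
theorem cube_in_Qp_ae (a b : ℤ) (ha : a ≠ 0) (hb : b ≠ 0) :
    ∃ S : Finset ℕ, ∀ p : ℕ, ∀ [Fact p.Prime], p ∉ S →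
      ∃ c ∈ ({a, b, a * b, a * b ^ 2} : Finset ℤ),
        ∃ y : ℚ_[p], y ^ 3 = (c : ℚ_[p]) := by
  refine ⟨(3 * a * b).natAbs.primeFactors, ?_⟩
  intro p hp hpS
  have hp' : p.Prime := hp.out
  have hne : (3 * a * b).natAbs ≠ 0 := by
    simp [Int.natAbs_ne_zero, ha, hb]
  have hnd : ¬ (p:ℤ) ∣ 3 * a * b := by
    intro h
    exact hpS (Nat.mem_primeFactors.2 ⟨hp', Int.natAbs_dvd_natAbs.2 (by simpa using h), hne⟩)
  have hpZ : Prime (p : ℤ) := Nat.prime_iff_prime_int.1 hp'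
  have hp3 : ¬ (p:ℤ) ∣ 3 := fun h => hnd (by rw [mul_assoc]; exact dvd_mul_of_dvd_left h _)
  have hpa : ¬ (p:ℤ) ∣ a := fun h => hnd (by rw [mul_assoc]; exact Dvd.dvd.mul_left (dvd_mul_of_dvd_left h b) 3)
  have hpb : ¬ (p:ℤ) ∣ b := fun h => hnd (dvd_mul_of_dvd_right h _)
  have hua : (a : ZMod p) ≠ 0 := fun h => hpa ((ZMod.intCast_zmod_eq_zero_iff_dvd _ _).1 h)
  have hub : (b : ZMod p) ≠ 0 := fun h => hpb ((ZMod.intCast_zmod_eq_zero_iff_dvd _ _).1 h)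
  obtain ⟨x, hx⟩ := (isUnit_iff_ne_zero.2 hua)
  obtain ⟨y, hy⟩ := (isUnit_iff_ne_zero.2 hub)
  obtain ⟨z, hz⟩ := cyclic_cube x y
  rcases hz with h | h | h | h
  · refine ⟨a, by simp, ?_⟩
    refine hensel_cube a hp3 hpa (z : ZMod p) ?_
    rw [← hx, ← h]; push_cast; ring
  · refine ⟨b, by simp, ?_⟩
    refine hensel_cube b hp3 hpb (z : ZMod p) ?_
    rw [← hy, ← h]; push_cast; ring
  · refine ⟨a * b, by simp, ?_⟩
    refine hensel_cube (a * b) hp3 (fun hd => (hpZ.dvd_mul.1 hd).elim hpa hpb) (z : ZMod p) ?_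
    have h' := congrArg (Units.val (α := ZMod p)) h
    push_cast at h' ⊢
    rw [hx, hy] at h'
    exact h'
  · refine ⟨a * b ^ 2, by simp, ?_⟩
    refine hensel_cube (a * b ^ 2) hp3
      (fun hd => (hpZ.dvd_mul.1 hd).elim hpa (fun h2 => hpb (hpZ.dvd_of_dvd_pow h2))) (z : ZMod p) ?_
    have h' := congrArg (Units.val (α := ZMod p)) h
    push_cast at h' ⊢
    rw [hx, hy] at h'
    exact h'
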